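/- Fix integers 1 ≤ k ≤ n, set m = n − k, and let λ be a partition in the k×m box. Let F be the standard flag and F̃ the opposite flag of ℂ^n. Then Ω_λ(F) ∩ Ω_{λ^∨}(F̃) consists of exactly one point, namely the coordinate subspace E_λ = span(e_{p_1(λ)},…,e_{p_k(λ)}): a k-dimensional subspace L ⊆ ℂ^n satisfies dim(L ∩ F_{p_j(λ)}) ≥ j and dim(L ∩ F̃_{p_j(λ^∨)}) ≥ j for all 1 ≤ j ≤ k if and only if L = E_λ. (This realizes the intersection number ∫ σ_λ · σ_{λ^∨} = 1 on Gr(k,n).) -/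

import Mathlib

/-- The coordinate subspace of `ℂ^n` spanned by the standard basis vectors `e_j`, `j ∈ s`. -/
noncomputable def coordSub (n : ℕ) (s : Set (Fin n)) : Submodule ℂ (Fin n → ℂ) :=
  Submodule.span ℂ ((fun j => Pi.single j (1 : ℂ)) '' s)

/-- The standard flag of `ℂ^n`: `stdFlag n i = span(e_1, …, e_{i+1})` (0-indexed `i`,
so `stdFlag n i` has dimension `i + 1`). -/
noncomputable def stdFlag (n : ℕ) (i : Fin n) : Submodule ℂ (Fin n → ℂ) :=
  coordSub n {j | j ≤ i}

/-- The opposite flag of `ℂ^n`: `oppFlag n i` is the span of the last `i + 1` standard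
basis vectors (0-indexed `i`, so `oppFlag n i` has dimension `i + 1`). -/
noncomputable def oppFlag (n : ℕ) (i : Fin n) : Submodule ℂ (Fin n → ℂ) :=
  coordSub n {j | n ≤ j.val + i.val + 1}

/-- The jump positions of a sequence `lam` in the `k × (n-k)` box, as indices into a
complete flag of `ℂ^n`: `posIdx n k hk lam j` is the 0-indexed position whose
1-indexed value is `p_j(lam) = (n-k) + (j+1) - lam j`. -/
def posIdx (n k : ℕ) (hk : k ≤ n) (lam : Fin k → ℕ) (j : Fin k) : Fin n :=
  ⟨(n - k) + j.val - lam j, by have := j.isLt; omega⟩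

/-- Membership of a subspace `L` in the Schubert variety `Ω_lam(G)` for a complete flag
`G` of `ℂ^n` (where `G i` has dimension `i + 1`): `dim (L ⊓ G (p_j lam)) ≥ j` for all
`j = 1, …, k` (1-indexed). -/
def inSchubert (n k : ℕ) (hk : k ≤ n) (G : Fin n → Submodule ℂ (Fin n → ℂ))
    (lam : Fin k → ℕ) (L : Submodule ℂ (Fin n → ℂ)) : Prop :=
  ∀ j : Fin k, j.val + 1 ≤ Module.finrank ℂ ↥(L ⊓ G (posIdx n k hk lam j))

/-- The coordinate subspace `E_lam = span(e_{p_1(lam)}, …, e_{p_k(lam)})` of `ℂ^n`. -/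
noncomputable def coordE (n k : ℕ) (hk : k ≤ n) (lam : Fin k → ℕ) :
    Submodule ℂ (Fin n → ℂ) :=
  coordSub n (Set.range (posIdx n k hk lam))

/-- The dual of a sequence `lam` in the `k × m` box. -/
def boxDual (k m : ℕ) (lam : Fin k → ℕ) : Fin k → ℕ :=
  fun i => m - lam i.rev

lemma singleOne_injective (n : ℕ) :
    Function.Injective (fun j : Fin n => Pi.single j (1 : ℂ)) := by
  intro i j h
  by_contra hne
  have := congrFun h i
  simp [Pi.single_apply, hne, Ne.symm hne] at this

lemma mem_coordSub {n : ℕ} {s : Set (Fin n)} {x : Fin n → ℂ} :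
    x ∈ coordSub n s ↔ ∀ j, j ∉ s → x j = 0 := by
  classical
  constructor
  · intro hx
    have hle : coordSub n s ≤ Submodule.pi sᶜ (fun _ => (⊥ : Submodule ℂ ℂ)) := by
      rw [coordSub, Submodule.span_le]
      rintro _ ⟨i, his, rfl⟩
      intro j hj
      have : j ≠ i := fun h => hj (h ▸ his)
      simp [Pi.single_apply, this]
    intro j hj
    simpa using hle hx j hj
  · intro h
    have hx : x = ∑ j : Fin n, Pi.single j (x j) := (Finset.univ_sum_single x).symm
    rw [hx]
    refine Submodule.sum_mem _ fun j _ => ?_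
    by_cases hj : j ∈ s
    · have : (Pi.single j (x j) : Fin n → ℂ) = x j • (Pi.single j (1:ℂ) : Fin n → ℂ) := by
        funext t
        by_cases ht : t = j <;> simp [Pi.single_apply, ht]
      rw [this]
      exact Submodule.smul_mem _ _ (Submodule.subset_span ⟨j, hj, rfl⟩)
    · rw [h j hj]; simp

lemma coordSub_mono {n : ℕ} {s t : Set (Fin n)} (h : s ⊆ t) : coordSub n s ≤ coordSub n t :=
  Submodule.span_mono (Set.image_mono h)

lemma finrank_coordSub (n : ℕ) (s : Set (Fin n)) :
    Module.finrank ℂ (coordSub n s) = s.ncard := by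
  classical
  have hli : LinearIndependent ℂ (fun x : s => (Pi.single (x : Fin n) (1:ℂ) : Fin n → ℂ)) := by
    have := (Pi.basisFun ℂ (Fin n)).linearIndependent
    have h2 : LinearIndependent ℂ (fun x : s => Pi.basisFun ℂ (Fin n) (x : Fin n)) :=
      this.comp _ Subtype.val_injective
    simpa using h2
  have hli' : LinearIndependent ℂ
      ((↑) : ((fun j : Fin n => Pi.single j (1:ℂ)) '' s) → (Fin n → ℂ)) :=
    LinearIndepOn.id_image (v := fun j : Fin n => Pi.single j (1:ℂ)) (s := s) hli
  rw [coordSub, finrank_span_set_eq_card hli']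
  rw [Set.toFinset_card, ← Set.ncard_image_of_injective s (singleOne_injective n),
    ← Nat.card_coe_set_eq, Nat.card_eq_fintype_card]

/-- For a partition `lam` in the `k × (n-k)` box, the intersection
`Ω_lam(F) ∩ Ω_{lam^∨}(F̃)` of the Schubert varieties for the standard flag `F` and the
opposite flag `F̃` consists of exactly one point, the coordinate subspace
`E_lam = span(e_{p_1(lam)}, …, e_{p_k(lam)})`: a `k`-dimensional subspace `L ⊆ ℂ^n`
satisfies both collections of Schubert conditions iff `L = E_lam`.
(This realizes the intersection number `∫ σ_lam · σ_{lam^∨} = 1` on `Gr(k,n)`.) -/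
theorem schubert_inter_dual_unique (n k : ℕ) (hk1 : 1 ≤ k) (hkn : k ≤ n)
    (lam : Fin k → ℕ)
    (hanti : ∀ i j : Fin k, i ≤ j → lam j ≤ lam i)
    (hbd : ∀ i, lam i ≤ n - k)
    (L : Submodule ℂ (Fin n → ℂ)) :
    (Module.finrank ℂ ↥L = k ∧
        inSchubert n k hkn (stdFlag n) lam L ∧
        inSchubert n k hkn (oppFlag n) (boxDual k (n - k) lam) L) ↔
      L = coordE n k hkn lam := by
  classical
  set p : Fin k → Fin n := posIdx n k hkn lam with hp
  have hpval : ∀ j : Fin k, (p j).val = (n - k) + j.val - lam j := fun j => rfl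
  have hpmono : ∀ i j : Fin k, i < j → p i < p j := by
    intro i j hij
    have h1 : lam j ≤ lam i := hanti i j (le_of_lt hij)
    have h2 : lam i ≤ n - k := hbd i
    have h3 : i.val < j.val := hij
    rw [Fin.lt_def, hpval, hpval]
    omega
  have hpinj : Function.Injective p := by
    intro i j h
    rcases lt_trichotomy i j with h' | h' | h'
    · exact absurd h (ne_of_lt (hpmono i j h'))
    · exact h'
    · exact absurd h.symm (ne_of_lt (hpmono j i h'))
  -- the oppFlag index set computation
  have hoppset : ∀ j : Fin k,
      {t : Fin n | n ≤ t.val + (posIdx n k hkn (boxDual k (n - k) lam) j.rev).val + 1}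
        = {t : Fin n | (p j).val ≤ t.val} := by
    intro j
    have hrev : (j.rev : ℕ) = k - (j.val + 1) := rfl
    have hdual : boxDual k (n - k) lam j.rev = (n - k) - lam j := by
      simp [boxDual, Fin.rev_rev]
    ext t
    simp only [Set.mem_setOf_eq, posIdx, hdual, hrev, hpval]
    have := hbd j
    have := j.isLt
    have := t.isLt
    constructor <;> intro <;> omega
  have hrevval : ∀ j : Fin k, (j.rev : ℕ) + 1 = k - j.val := by
    intro j
    have : (j.rev : ℕ) = k - (j.val + 1) := rfl
    have := j.isLt
    omega
  constructor
  · rintro ⟨hdim, hstd, hopp⟩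
    -- show each e_{p j} ∈ L
    have key : ∀ j : Fin k, (Pi.single (p j) (1 : ℂ) : Fin n → ℂ) ∈ L := by
      intro j
      set A := L ⊓ stdFlag n (p j) with hA
      set B := L ⊓ oppFlag n (posIdx n k hkn (boxDual k (n - k) lam) j.rev) with hB
      have hA1 : j.val + 1 ≤ Module.finrank ℂ A := hstd j
      have hB1 : k - j.val ≤ Module.finrank ℂ B := by
        have := hopp j.rev
        rwa [hrevval j] at this
      have hsup : A ⊔ B ≤ L := sup_le inf_le_left inf_le_left
      have hsuprank : Module.finrank ℂ ↥(A ⊔ B) ≤ k := by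
        rw [← hdim]; exact Submodule.finrank_mono hsup
      have heq := Submodule.finrank_sup_add_finrank_inf_eq A B
      have hABrank : 1 ≤ Module.finrank ℂ ↥(A ⊓ B) := by
        have hjk := j.isLt
        omega
      have hne : A ⊓ B ≠ ⊥ := by
        intro h
        rw [h] at hABrank
        simp [finrank_bot] at hABrank
      obtain ⟨x, hx, hx0⟩ := Submodule.exists_mem_ne_zero_of_ne_bot hne
      obtain ⟨hxA, hxB⟩ := Submodule.mem_inf.mp hx
      obtain ⟨hxL, hxstd⟩ := Submodule.mem_inf.mp hxA
      obtain ⟨-, hxopp⟩ := Submodule.mem_inf.mp hxB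
      have hzero : ∀ t : Fin n, t ≠ p j → x t = 0 := by
        intro t ht
        rcases lt_or_gt_of_ne (fun h : t.val = (p j).val => ht (Fin.ext h)) with h | h
        · -- t < p j : use opp flag condition
          have := (mem_coordSub.mp hxopp) t
          apply this
          rw [oppFlag] at hxopp
          have hset := hoppset j
          intro hmem
          have : (p j).val ≤ t.val := by
            have := Set.ext_iff.mp hset t
            exact this.mp hmem
          omega
        · have := (mem_coordSub.mp hxstd) t
          apply this
          intro hmem
          have : t.val ≤ (p j).val := hmem
          omega
      have hxpj : x (p j) ≠ 0 := by
        intro h0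
        apply hx0
        funext t
        by_cases ht : t = p j
        · rw [ht, h0]; rfl
        · exact hzero t ht
      have hrepr : (Pi.single (p j) (1 : ℂ) : Fin n → ℂ) = (x (p j))⁻¹ • x := by
        funext t
        by_cases ht : t = p j
        · subst ht
          simp [Pi.single_apply, inv_mul_cancel₀ hxpj]
        · simp [Pi.single_apply, ht, hzero t ht]
      rw [hrepr]
      exact Submodule.smul_mem _ _ hxL
    have hle : coordE n k hkn lam ≤ L := by
      rw [coordE, coordSub, Submodule.span_le]
      rintro _ ⟨_, ⟨j, rfl⟩, rfl⟩
      exact key j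
    have hErank : Module.finrank ℂ (coordE n k hkn lam) = k := by
      rw [coordE, finrank_coordSub, ← Set.image_univ,
        Set.ncard_image_of_injective _ hpinj, Set.ncard_univ, Nat.card_eq_fintype_card,
        Fintype.card_fin]
    exact (Submodule.eq_of_le_of_finrank_le hle (by rw [hErank, hdim])).symm
  · rintro rfl
    have hErank : Module.finrank ℂ (coordE n k hkn lam) = k := by
      rw [coordE, finrank_coordSub, ← Set.image_univ,
        Set.ncard_image_of_injective _ hpinj, Set.ncard_univ, Nat.card_eq_fintype_card,
        Fintype.card_fin]
    refine ⟨hErank, ?_, ?_⟩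
    · intro j
      have hsub : coordSub n (p '' {i : Fin k | i ≤ j})
          ≤ coordE n k hkn lam ⊓ stdFlag n (posIdx n k hkn lam j) := by
        refine le_inf (coordSub_mono ?_) (coordSub_mono ?_)
        · exact Set.image_subset_range p _
        · rintro _ ⟨i, hi, rfl⟩
          show p i ≤ posIdx n k hkn lam j
          rcases eq_or_lt_of_le (show i ≤ j from hi) with h | h
          · subst h; exact le_rfl
          · exact le_of_lt (hpmono i j h)
      have hcard : (p '' {i : Fin k | i ≤ j}).ncard = j.val + 1 := by
        rw [Set.ncard_image_of_injective _ hpinj]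
        have : {i : Fin k | i ≤ j} = ↑(Finset.Iic j) := by ext i; simp
        rw [this, Set.ncard_coe_finset, Fin.card_Iic]
      calc j.val + 1 = Module.finrank ℂ (coordSub n (p '' {i : Fin k | i ≤ j})) := by
            rw [finrank_coordSub, hcard]
        _ ≤ _ := Submodule.finrank_mono hsub
    · intro j'
      set j := j'.rev with hj
      have hj' : j.rev = j' := Fin.rev_rev j'
      have hflag : oppFlag n (posIdx n k hkn (boxDual k (n - k) lam) j.rev)
          = coordSub n {t : Fin n | (p j).val ≤ t.val} := by
        rw [oppFlag, hoppset j]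
      have hsub : coordSub n (p '' {i : Fin k | j ≤ i})
          ≤ coordE n k hkn lam ⊓ oppFlag n (posIdx n k hkn (boxDual k (n - k) lam) j') := by
        rw [← hj', hflag]
        refine le_inf (coordSub_mono ?_) (coordSub_mono ?_)
        · exact Set.image_subset_range p _
        · rintro _ ⟨i, hi, rfl⟩
          show (p j).val ≤ (p i).val
          rcases eq_or_lt_of_le (show j ≤ i from hi) with h | h
          · subst h; exact le_rfl
          · exact le_of_lt (hpmono j i h)
      have hcard : (p '' {i : Fin k | j ≤ i}).ncard = j'.val + 1 := by
        rw [Set.ncard_image_of_injective _ hpinj]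
        have : {i : Fin k | j ≤ i} = ↑(Finset.Ici j) := by ext i; simp
        rw [this, Set.ncard_coe_finset, Fin.card_Ici]
        have h1 : (j : ℕ) = k - (j'.val + 1) := rfl
        have := j'.isLt
        omega
      calc j'.val + 1 = Module.finrank ℂ (coordSub n (p '' {i : Fin k | j ≤ i})) := by
            rw [finrank_coordSub, hcard]
        _ ≤ _ := Submodule.finrank_mono hsub
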